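/- In the constant-drift balanced case (A=B=0), the polynomials P_n defined by P₀ = 1 and P_{n+1}(x) = C P_n'(x) + (α₀ x + γ₀) P_n(x) satisfy P_n(x) = H_n(α₀ x + γ₀, α₀ C), where H_n(X,Y) are the Hermite–Kampé de Fériet polynomials defined by the two-variable recurrence H₀(X,Y)=1, H_{n+1}(X,Y) = X H_n(X,Y) + n Y H_{n-1}(X,Y). -/

import Mathlib

/-- Constant-drift balanced case (`A = B = 0`): the polynomials `P₀ = 1`,
`P_{n+1}(x) = C P_n'(x) + (α₀ x + γ₀) P_n(x)` satisfy
`P_n(x) = H_n(α₀ x + γ₀, α₀ C)`, where `H_n` are the Hermite–Kampé de Fériet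
polynomials given by `H₀ = 1`, `H₁(X,Y) = X`,
`H_{n+2}(X,Y) = X H_{n+1}(X,Y) + (n+1) Y H_n(X,Y)`. -/
theorem stmt_13 (α₀ γ₀ C : ℝ)
    (H : ℕ → ℝ → ℝ → ℝ)
    (hH0 : ∀ X Y, H 0 X Y = 1)
    (hH1 : ∀ X Y, H 1 X Y = X)
    (hHrec : ∀ (n : ℕ) (X Y : ℝ),
      H (n + 2) X Y = X * H (n + 1) X Y + (n + 1 : ℝ) * Y * H n X Y)
    (P : ℕ → ℝ → ℝ)
    (hP0 : ∀ x, P 0 x = 1)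
    (hPrec : ∀ (n : ℕ) (x : ℝ),
      P (n + 1) x = C * deriv (P n) x + (α₀ * x + γ₀) * P n x) :
    ∀ (n : ℕ) (x : ℝ), P n x = H n (α₀ * x + γ₀) (α₀ * C) := by
  set h : ℕ → ℝ → ℝ := fun n x => H n (α₀ * x + γ₀) (α₀ * C) with hh
  -- derivative sequence
  set d : ℕ → ℝ → ℝ := fun n x => (n : ℝ) * α₀ * h (n - 1) x with hd
  have hX : ∀ x : ℝ, HasDerivAt (fun x => α₀ * x + γ₀) α₀ x := by
    intro x
    simpa using ((hasDerivAt_id x).const_mul α₀).add_const γ₀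
  have key : ∀ n : ℕ, (∀ x, HasDerivAt (h n) (d n x) x) ∧
      (∀ x, HasDerivAt (h (n + 1)) (d (n + 1) x) x) := by
    intro n
    induction n with
    | zero =>
      constructor
      · intro x
        have : h 0 = fun _ => 1 := by funext y; simp [hh, hH0]
        rw [this]
        simpa [hd, hh] using (hasDerivAt_const x (1 : ℝ))
      · intro x
        have : h 1 = fun y => α₀ * y + γ₀ := by funext y; simp [hh, hH1]
        rw [this]
        simpa [hd, hh, hH0] using hX x
    | succ n ih =>
      refine ⟨ih.2, fun x => ?_⟩
      have heq : h (n + 2) = fun y =>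
          (α₀ * y + γ₀) * h (n + 1) y + (n + 1 : ℝ) * (α₀ * C) * h n y := by
        funext y; simp [hh, hHrec]
      rw [heq]
      have h1 : HasDerivAt (fun y => (α₀ * y + γ₀) * h (n + 1) y)
          (α₀ * h (n + 1) x + (α₀ * x + γ₀) * d (n + 1) x) x :=
        (hX x).mul (ih.2 x)
      have h2 : HasDerivAt (fun y => (n + 1 : ℝ) * (α₀ * C) * h n y)
          ((n + 1 : ℝ) * (α₀ * C) * d n x) x := (ih.1 x).const_mul _
      have := h1.add h2
      refine this.congr_deriv ?_
      symm
      simp only [hd, Nat.add_sub_cancel]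
      cases n with
      | zero => simp [hh, hH0, hH1]; ring
      | succ m =>
        simp only [Nat.add_sub_cancel, hh, hHrec]
        push_cast
        ring
  have main : ∀ n : ℕ, (fun x => P n x) = h n := by
    intro n
    induction n with
    | zero => funext x; simp [hh, hP0, hH0]
    | succ n ih =>
      funext x
      have hderiv : deriv (P n) x = d n x := by
        have : P n = h n := ih
        rw [this]
        exact ((key n).1 x).deriv
      rw [hPrec, hderiv]
      have ihx : P n x = h n x := congrFun ih x
      rw [ihx]
      cases n with
      | zero => simp [hd, hh, hH0, hH1]
      | succ m =>
        simp only [hd, hh, Nat.add_sub_cancel, hHrec]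
        push_cast
        ring
  intro n x
  exact congrFun (main n) x
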